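/- Let n ≥ 2 and let i_1, …, i_n be integers with each i_j ≥ 2^(2^(n-1)+1). Then the general position number of the torus C_{i_1} □ ⋯ □ C_{i_n} is at least 2^(2^(n-1)): there exists a set S of 2^(2^(n-1)) vertices of C_{i_1} □ ⋯ □ C_{i_n} such that no three pairwise distinct u, v, w ∈ S satisfy d(u,w) = d(u,v) + d(v,w), where d is the graph distance of the torus. -/

import Mathlib

/-- The graph distance on the cycle `C_m` with vertex set `ℤ/mℤ`:
`d(a,b) = min(c, m − c)` where `c ∈ {0,…,m−1}` represents `a − b`. -/
def cycleDist {m : ℕ} (a b : ZMod m) : ℕ := min (a - b).val (m - (a - b).val)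

/-- The graph distance on the torus `C_{i_1} □ ⋯ □ C_{i_n}`: the sum of the
cycle distances in the coordinates. -/
def torusDist {n : ℕ} {i : Fin n → ℕ} (u v : (j : Fin n) → ZMod (i j)) : ℕ :=
  ∑ j, cycleDist (u j) (v j)

lemma sum_range_two_pow_lt (s : ℕ) : ∑ u ∈ Finset.range s, 2 ^ u < 2 ^ s := by
  induction s with
  | zero => simp
  | succ k ih => rw [Finset.sum_range_succ, pow_succ]; omega

lemma two_pow_sum_lt {K : ℕ} (T : Finset (Fin K)) (s : ℕ) (h : ∀ t ∈ T, (t : ℕ) < s) :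
    ∑ t ∈ T, 2 ^ (t : ℕ) < 2 ^ s := by
  classical
  have h1 : ∑ t ∈ T, 2 ^ (t : ℕ) = ∑ u ∈ T.image Fin.val, 2 ^ u := by
    rw [Finset.sum_image]
    intro x _ y _ hxy
    exact Fin.val_injective hxy
  have h2 : T.image Fin.val ⊆ Finset.range s := by
    intro u hu
    simp only [Finset.mem_image] at hu
    obtain ⟨t, ht, rfl⟩ := hu
    exact Finset.mem_range.mpr (h t ht)
  calc ∑ t ∈ T, 2 ^ (t : ℕ) = ∑ u ∈ T.image Fin.val, 2 ^ u := h1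
    _ ≤ ∑ u ∈ Finset.range s, 2 ^ u := Finset.sum_le_sum_of_subset h2
    _ < 2 ^ s := sum_range_two_pow_lt s

lemma cycleDist_natCast {m L x y : ℕ} (hm : 2 * L ≤ m) (hx : x < L) (hy : y < L) :
    cycleDist (x : ZMod m) (y : ZMod m) = Nat.dist x y := by
  haveI : NeZero m := ⟨by omega⟩
  rcases le_or_gt y x with hxy | hxy
  · unfold cycleDist
    rw [← Nat.cast_sub hxy, ZMod.val_natCast, Nat.mod_eq_of_lt (by omega)]
    simp [Nat.dist]
    omega
  · have h1 : ((m - (y - x) : ℕ) : ZMod m) = (x : ZMod m) - y := by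
      rw [Nat.cast_sub (by omega), Nat.cast_sub (le_of_lt hxy)]
      simp [ZMod.natCast_self]
    unfold cycleDist
    rw [← h1, ZMod.val_natCast, Nat.mod_eq_of_lt (by omega)]
    simp [Nat.dist]
    omega

/-- Mask: bit `j` of ground position `t`. -/
def gpMask (n K : ℕ) (j : Fin n) (t : Fin K) : Bool := Nat.testBit (t : ℕ) (j : ℕ)

/-- Coordinate value of point `p` in coordinate `j`. -/
def gpNval (n K : ℕ) (j : Fin n) (p : Fin K → Bool) : ℕ :=
  ∑ t : Fin K, if p t ≠ gpMask n K j t then 2 ^ (t : ℕ) else 0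

lemma gpNval_lt (n K : ℕ) (j : Fin n) (p : Fin K → Bool) : gpNval n K j p < 2 ^ K := by
  unfold gpNval
  calc ∑ t : Fin K, (if p t ≠ gpMask n K j t then 2 ^ (t : ℕ) else 0)
      ≤ ∑ t : Fin K, 2 ^ (t : ℕ) := Finset.sum_le_sum (fun t _ => by split <;> simp)
    _ < 2 ^ K := two_pow_sum_lt Finset.univ K (fun t _ => t.isLt)

lemma gpNval_cast (n K : ℕ) (j : Fin n) (p : Fin K → Bool) :
    (gpNval n K j p : ℤ) = ∑ t : Fin K, if p t ≠ gpMask n K j t then (2 : ℤ) ^ (t : ℕ) else 0 := by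
  unfold gpNval
  push_cast
  apply Finset.sum_congr rfl
  intro t _
  split <;> simp

/-- Key sign lemma: if `s` is the highest position where `p` and `q` differ and the
`q`-indicator at `s` in coordinate `j` is on, then the `j`-value of `p` is less than
that of `q`. -/
lemma gpKey (n K : ℕ) (p q : Fin K → Bool) (j : Fin n) (s : Fin K)
    (hs : p s ≠ q s) (hmax : ∀ t : Fin K, p t ≠ q t → (t : ℕ) ≤ (s : ℕ))
    (hdir : q s ≠ gpMask n K j s) :
    (gpNval n K j p : ℤ) < gpNval n K j q := by
  classical
  set f : Fin K → ℤ := fun t =>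
    (if q t ≠ gpMask n K j t then (2 : ℤ) ^ (t : ℕ) else 0) -
    (if p t ≠ gpMask n K j t then (2 : ℤ) ^ (t : ℕ) else 0) with hf
  have hsum : (gpNval n K j q : ℤ) - (gpNval n K j p : ℤ) = ∑ t, f t := by
    rw [gpNval_cast, gpNval_cast, ← Finset.sum_sub_distrib]
  have hps : p s = gpMask n K j s := by
    cases hqs : q s <;> cases hms : gpMask n K j s <;> cases hps : p s <;> simp_all
  have h1 : f s = 2 ^ (s : ℕ) := by simp [hf, hdir, hps]
  set T : Finset (Fin K) := (Finset.univ.filter (fun t => p t ≠ q t)).erase s with hT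
  have hzero : ∀ t ∈ Finset.univ.erase s, t ∉ T → f t = 0 := by
    intro t ht htT
    simp only [hT, Finset.mem_erase, Finset.mem_filter, Finset.mem_univ, true_and,
      not_and, not_not] at ht htT
    have : p t = q t := htT ht.1
    simp [hf, this]
  have hsub : ∑ t ∈ Finset.univ.erase s, f t = ∑ t ∈ T, f t := by
    refine (Finset.sum_subset ?_ hzero).symm
    intro t ht
    have h' := Finset.mem_erase.mp ht
    exact Finset.mem_erase.mpr ⟨h'.1, Finset.mem_univ t⟩
  have hTlt : ∀ t ∈ T, (t : ℕ) < (s : ℕ) := by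
    intro t ht
    simp only [hT, Finset.mem_erase, Finset.mem_filter, Finset.mem_univ, true_and] at ht
    have := hmax t ht.2
    have hts : t ≠ s := ht.1
    have : (t : ℕ) ≠ (s : ℕ) := fun h => hts (Fin.val_injective h)
    omega
  have habs : |∑ t ∈ T, f t| < 2 ^ (s : ℕ) := by
    have hb : ∀ t ∈ T, |f t| ≤ (2 : ℤ) ^ (t : ℕ) := by
      intro t _
      have hpos : (0 : ℤ) ≤ 2 ^ (t : ℕ) := by positivity
      simp only [hf]
      split <;> split <;> simp [abs_of_nonneg, abs_of_nonpos, hpos]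
    have hcast : ∑ t ∈ T, (2 : ℤ) ^ (t : ℕ) = ((∑ t ∈ T, 2 ^ (t : ℕ) : ℕ) : ℤ) := by
      push_cast; rfl
    calc |∑ t ∈ T, f t| ≤ ∑ t ∈ T, |f t| := Finset.abs_sum_le_sum_abs _ _
      _ ≤ ∑ t ∈ T, (2 : ℤ) ^ (t : ℕ) := Finset.sum_le_sum hb
      _ < 2 ^ (s : ℕ) := by
          rw [hcast]
          exact_mod_cast two_pow_sum_lt T (s : ℕ) hTlt
  have hsplit : ∑ t, f t = f s + ∑ t ∈ Finset.univ.erase s, f t :=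
    (Finset.add_sum_erase _ f (Finset.mem_univ s)).symm
  have : (0 : ℤ) < ∑ t, f t := by
    rw [hsplit, h1, hsub]
    have := abs_lt.mp habs
    linarith
  linarith [hsum ▸ this]

/-- Any coordinate separates distinct points. -/
lemma gpNe (n K : ℕ) (p q : Fin K → Bool) (hpq : p ≠ q) (j : Fin n) :
    gpNval n K j p ≠ gpNval n K j q := by
  classical
  have hne : (Finset.univ.filter (fun t => p t ≠ q t)).Nonempty := by
    obtain ⟨t, ht⟩ := Function.ne_iff.mp hpq
    exact ⟨t, by simp [ht]⟩
  set s := (Finset.univ.filter (fun t => p t ≠ q t)).max' hne with hsdef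
  have hsmem := (Finset.univ.filter (fun t => p t ≠ q t)).max'_mem hne
  have hs : p s ≠ q s := by
    simpa using (Finset.mem_filter.mp hsmem).2
  have hmax : ∀ t : Fin K, p t ≠ q t → (t : ℕ) ≤ (s : ℕ) := by
    intro t ht
    exact Finset.le_max' _ t (by simp [ht])
  by_cases hd : q s = gpMask n K j s
  · have hps : p s ≠ gpMask n K j s := by rw [← hd]; exact hs
    have := gpKey n K q p j s (Ne.symm hs) (fun t ht => hmax t (Ne.symm ht)) hps
    intro h; rw [h] at this; exact lt_irrefl _ this
  · have := gpKey n K p q j s hs hmax hd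
    intro h; rw [h] at this; exact lt_irrefl _ this

lemma gp_bool_aux1 (a b c d : Bool) (hab : a ≠ b) (hcd : c ≠ d) (h : a = c) : b = d := by
  revert hab hcd h; cases a <;> cases b <;> cases c <;> cases d <;> decide

lemma gp_bool_aux2 (a b c d : Bool) (hab : a ≠ b) (hcd : c ≠ d) (h : a ≠ c) : b ≠ d := by
  revert hab hcd h; cases a <;> cases b <;> cases c <;> cases d <;> decide

/-- Main combinatorial lemma: for pairwise distinct points there is a coordinate
where `q` lies strictly outside the interval spanned by `p` and `r`. -/
lemma gpMain (n K : ℕ) (hn : 2 ≤ n) (hK : K = 2 ^ (n - 1)) (p q r : Fin K → Bool)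
    (hpq : p ≠ q) (hqr : q ≠ r) :
    ∃ j : Fin n, Nat.dist (gpNval n K j p) (gpNval n K j r) <
      Nat.dist (gpNval n K j p) (gpNval n K j q) +
      Nat.dist (gpNval n K j q) (gpNval n K j r) := by
  classical
  have hne1 : (Finset.univ.filter (fun t => p t ≠ q t)).Nonempty := by
    obtain ⟨t, ht⟩ := Function.ne_iff.mp hpq
    exact ⟨t, by simp [ht]⟩
  have hne2 : (Finset.univ.filter (fun t => q t ≠ r t)).Nonempty := by
    obtain ⟨t, ht⟩ := Function.ne_iff.mp hqr
    exact ⟨t, by simp [ht]⟩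
  set s1 := (Finset.univ.filter (fun t => p t ≠ q t)).max' hne1 with hs1def
  set s2 := (Finset.univ.filter (fun t => q t ≠ r t)).max' hne2 with hs2def
  have hs1 : p s1 ≠ q s1 := by
    simpa using (Finset.mem_filter.mp ((Finset.univ.filter (fun t => p t ≠ q t)).max'_mem hne1)).2
  have hs2 : q s2 ≠ r s2 := by
    simpa using (Finset.mem_filter.mp ((Finset.univ.filter (fun t => q t ≠ r t)).max'_mem hne2)).2
  have hmax1 : ∀ t : Fin K, p t ≠ q t → (t : ℕ) ≤ (s1 : ℕ) := by
    intro t ht; exact Finset.le_max' _ t (by simp [ht])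
  have hmax2 : ∀ t : Fin K, q t ≠ r t → (t : ℕ) ≤ (s2 : ℕ) := by
    intro t ht; exact Finset.le_max' _ t (by simp [ht])
  clear_value s1 s2
  clear hs1def hs2def hne1 hne2
  -- From a coordinate where q is strictly outside [p,r], conclude.
  have finish : ∀ j : Fin n,
      ((gpNval n K j p : ℤ) < gpNval n K j q ∧ (gpNval n K j r : ℤ) < gpNval n K j q) ∨
      ((gpNval n K j q : ℤ) < gpNval n K j p ∧ (gpNval n K j q : ℤ) < gpNval n K j r) →
      Nat.dist (gpNval n K j p) (gpNval n K j r) <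
        Nat.dist (gpNval n K j p) (gpNval n K j q) +
        Nat.dist (gpNval n K j q) (gpNval n K j r) := by
    intro j h
    have h' : (gpNval n K j p < gpNval n K j q ∧ gpNval n K j r < gpNval n K j q) ∨
        (gpNval n K j q < gpNval n K j p ∧ gpNval n K j q < gpNval n K j r) := by
      rcases h with ⟨h1, h2⟩ | ⟨h1, h2⟩
      · exact Or.inl ⟨by exact_mod_cast h1, by exact_mod_cast h2⟩
      · exact Or.inr ⟨by exact_mod_cast h1, by exact_mod_cast h2⟩
    simp only [Nat.dist]
    omega
  by_cases hss : s1 = s2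
  · -- q differs from both p and r at s := s1
    subst hss
    refine ⟨⟨n - 1, by omega⟩, finish _ ?_⟩
    by_cases hd : q s1 = gpMask n K ⟨n - 1, by omega⟩ s1
    · refine Or.inr ⟨?_, ?_⟩
      · exact gpKey n K q p _ s1 (Ne.symm hs1) (fun t ht => hmax1 t (Ne.symm ht))
          (by rw [← hd]; exact hs1)
      · exact gpKey n K q r _ s1 hs2 hmax2 (by rw [← hd]; exact (Ne.symm hs2))
    · refine Or.inl ⟨?_, ?_⟩
      · exact gpKey n K p q _ s1 hs1 hmax1 hd
      · exact gpKey n K r q _ s1 (Ne.symm hs2) (fun t ht => hmax2 t (Ne.symm ht)) hd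
  · by_cases hq : q s1 = q s2
    · -- use coordinate n-1, where all masks are false
      set j0 : Fin n := ⟨n - 1, by omega⟩ with hj0
      have hm1 : gpMask n K j0 s1 = false := by
        apply Nat.testBit_lt_two_pow
        have := s1.isLt
        simpa [hK, hj0] using this
      have hm2 : gpMask n K j0 s2 = false := by
        apply Nat.testBit_lt_two_pow
        have := s2.isLt
        simpa [hK, hj0] using this
      refine ⟨j0, finish _ ?_⟩
      cases hqs : q s1
      · refine Or.inr ⟨?_, ?_⟩
        · refine gpKey n K q p j0 s1 (Ne.symm hs1) (fun t ht => hmax1 t (Ne.symm ht)) ?_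
          rw [hm1]
          intro h
          exact hs1 (by rw [h, hqs])
        · refine gpKey n K q r j0 s2 hs2 hmax2 ?_
          rw [hm2]
          intro h
          exact hs2 (by rw [h, ← hqs, hq])
      · refine Or.inl ⟨?_, ?_⟩
        · exact gpKey n K p q j0 s1 hs1 hmax1 (by rw [hm1, hqs]; simp)
        · exact gpKey n K r q j0 s2 (Ne.symm hs2) (fun t ht => hmax2 t (Ne.symm ht))
            (by rw [hm2, ← hq, hqs]; simp)
    · -- q s1 ≠ q s2 : find a bit where s1 and s2 differ
      have hvne : (s1 : ℕ) ≠ (s2 : ℕ) := fun h => hss (Fin.val_injective h)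
      have hex : ∃ j' : ℕ, j' < n - 1 ∧
          Nat.testBit (s1 : ℕ) j' ≠ Nat.testBit (s2 : ℕ) j' := by
        by_contra hcon
        push_neg at hcon
        apply hvne
        apply Nat.eq_of_testBit_eq
        intro i
        by_cases hi : i < n - 1
        · exact hcon i hi
        · have e1 : Nat.testBit (s1 : ℕ) i = false := by
            apply Nat.testBit_lt_two_pow
            have := s1.isLt
            have hle : 2 ^ (n - 1) ≤ 2 ^ i := Nat.pow_le_pow_right (by norm_num) (by omega)
            omega
          have e2 : Nat.testBit (s2 : ℕ) i = false := by
            apply Nat.testBit_lt_two_pow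
            have := s2.isLt
            have hle : 2 ^ (n - 1) ≤ 2 ^ i := Nat.pow_le_pow_right (by norm_num) (by omega)
            omega
          rw [e1, e2]
      obtain ⟨j', hj'lt, hbit⟩ := hex
      set j0 : Fin n := ⟨j', by omega⟩ with hj0
      have hmne : gpMask n K j0 s1 ≠ gpMask n K j0 s2 := hbit
      refine ⟨j0, finish _ ?_⟩
      by_cases hd : q s1 = gpMask n K j0 s1
      · have hd2 : q s2 = gpMask n K j0 s2 := by
          cases h1 : q s1 <;> cases h2 : q s2 <;> cases h3 : gpMask n K j0 s1 <;>
            cases h4 : gpMask n K j0 s2 <;> simp_all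
        refine Or.inr ⟨?_, ?_⟩
        · refine gpKey n K q p j0 s1 (Ne.symm hs1) (fun t ht => hmax1 t (Ne.symm ht)) ?_
          rw [← hd]; exact hs1
        · refine gpKey n K q r j0 s2 hs2 hmax2 ?_
          rw [← hd2]; exact (Ne.symm hs2)
      · have hd2 : q s2 ≠ gpMask n K j0 s2 := by
          cases h1 : q s1 <;> cases h2 : q s2 <;> cases h3 : gpMask n K j0 s1 <;>
            cases h4 : gpMask n K j0 s2 <;> simp_all
        exact Or.inl ⟨gpKey n K p q j0 s1 hs1 hmax1 hd,
          gpKey n K r q j0 s2 (Ne.symm hs2) (fun t ht => hmax2 t (Ne.symm ht)) hd2⟩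

/-- If `n ≥ 2` and all `i_j ≥ 2^(2^(n-1)+1)`, then the torus
`C_{i_1} □ ⋯ □ C_{i_n}` has a general position set of cardinality
`2^(2^(n-1))`; in particular its general position number is at least
`2^(2^(n-1))`. -/
theorem gp_lower_bound_of_torus (n : ℕ) (hn : 2 ≤ n) (i : Fin n → ℕ)
    (hi : ∀ j, 2 ^ (2 ^ (n - 1) + 1) ≤ i j) :
    ∃ S : Set ((j : Fin n) → ZMod (i j)),
      S.encard = 2 ^ 2 ^ (n - 1) ∧
      ∀ u ∈ S, ∀ v ∈ S, ∀ w ∈ S, u ≠ v → u ≠ w → v ≠ w →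
        torusDist u w ≠ torusDist u v + torusDist v w := by
  classical
  set K : ℕ := 2 ^ (n - 1) with hK
  have hiK : ∀ j, 2 * 2 ^ K ≤ i j := by
    intro j
    have := hi j
    have h2 : (2 : ℕ) ^ (K + 1) = 2 * 2 ^ K := by rw [pow_succ]; ring
    omega
  set vtx : (Fin K → Bool) → ((j : Fin n) → ZMod (i j)) :=
    fun p j => ((gpNval n K j p : ℕ) : ZMod (i j)) with hvtx
  have hdist : ∀ p q (j : Fin n), cycleDist (vtx p j) (vtx q j) =
      Nat.dist (gpNval n K j p) (gpNval n K j q) := by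
    intro p q j
    exact cycleDist_natCast (hiK j) (gpNval_lt n K j p) (gpNval_lt n K j q)
  have htorus : ∀ p q, torusDist (vtx p) (vtx q) =
      ∑ j, Nat.dist (gpNval n K j p) (gpNval n K j q) := by
    intro p q
    unfold torusDist
    exact Finset.sum_congr rfl (fun j _ => hdist p q j)
  have hinj : Function.Injective vtx := by
    intro p q h
    by_contra hpq
    have j0 : Fin n := ⟨0, by omega⟩
    have hne := gpNe n K p q hpq j0
    have heq : vtx p j0 = vtx q j0 := congrFun h j0
    have hv : (gpNval n K j0 p : ZMod (i j0)).val = (gpNval n K j0 q : ZMod (i j0)).val := by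
      rw [show ((gpNval n K j0 p : ℕ) : ZMod (i j0)) = vtx p j0 from rfl,
        show ((gpNval n K j0 q : ℕ) : ZMod (i j0)) = vtx q j0 from rfl, heq]
    haveI : NeZero (i j0) := ⟨by have := hiK j0; have : 0 < 2 ^ K := Nat.pow_pos (by norm_num); omega⟩
    rw [ZMod.val_natCast, ZMod.val_natCast,
      Nat.mod_eq_of_lt (lt_of_lt_of_le (gpNval_lt n K j0 p) (by have := hiK j0; omega)),
      Nat.mod_eq_of_lt (lt_of_lt_of_le (gpNval_lt n K j0 q) (by have := hiK j0; omega))] at hv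
    exact hne hv
  refine ⟨Set.range vtx, ?_, ?_⟩
  · rw [← Set.image_univ, Set.InjOn.encard_image (hinj.injOn)]
    rw [Set.encard_univ]
    have : ENat.card (Fin K → Bool) = ((2 ^ K : ℕ) : ℕ∞) := by
      rw [ENat.card_eq_coe_fintype_card]
      congr 1
      rw [Fintype.card_fun]
      simp
    rw [this, hK]
    push_cast
    rfl
  · rintro u ⟨p, rfl⟩ v ⟨q, rfl⟩ w ⟨r, rfl⟩ huv _ hvw
    have hpq : p ≠ q := fun h => huv (by rw [h])
    have hqr : q ≠ r := fun h => hvw (by rw [h])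
    obtain ⟨j, hj⟩ := gpMain n K hn hK p q r hpq hqr
    rw [htorus, htorus, htorus]
    intro heq
    have hlt : ∑ j', Nat.dist (gpNval n K j' p) (gpNval n K j' r) <
        ∑ j', (Nat.dist (gpNval n K j' p) (gpNval n K j' q) +
          Nat.dist (gpNval n K j' q) (gpNval n K j' r)) := by
      refine Finset.sum_lt_sum (fun j' _ => Nat.dist.triangle_inequality _ _ _)
        ⟨j, Finset.mem_univ j, hj⟩
    rw [Finset.sum_add_distrib] at hlt
    omega
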